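/- (Krasnoselskii–Mann algorithm) Let H be a real Hilbert space, let D be a nonempty closed convex subset of H, and let T : D → D be a non-expansive operator whose fixed-point set Fix T = {x ∈ D : T(x) = x} is nonempty. Let (λ_k)_{k≥1} be a sequence in [0,1] with Σ_{k=1}^∞ λ_k(1−λ_k) = +∞, and let f₀ ∈ D. Then the sequence defined by f_{k+1} = f_k + λ_k (T(f_k) − f_k) converges weakly to a point in Fix T. -/

import Mathlib

open Filter Topology

section KMaux
open scoped Classical

/-- a chosen limit of a real sequence along an ultrafilter -/
noncomputable def kmUlim (U : Ultrafilter ℕ) (u : ℕ → ℝ) : ℝ :=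
  if h : ∃ c, Filter.Tendsto u (U : Filter ℕ) (nhds c) then h.choose else 0

lemma kmUlim_spec {U : Ultrafilter ℕ} {u : ℕ → ℝ}
    (h : ∃ c, Filter.Tendsto u (U : Filter ℕ) (nhds c)) :
    Filter.Tendsto u (U : Filter ℕ) (nhds (kmUlim U u)) := by
  rw [kmUlim]
  rw [dif_pos h]
  exact h.choose_spec

lemma km_exists_ulim {U : Ultrafilter ℕ} {u : ℕ → ℝ} {M : ℝ} (hb : ∀ n, |u n| ≤ M) :
    ∃ c, Filter.Tendsto u (U : Filter ℕ) (nhds c) := by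
  have hc : IsCompact (Set.Icc (-M) M) := isCompact_Icc
  have hle : (Ultrafilter.map u U : Filter ℝ) ≤ Filter.principal (Set.Icc (-M) M) := by
    rw [le_principal_iff, Ultrafilter.coe_map, Filter.mem_map]
    exact Filter.univ_mem' (fun n => abs_le.mp (hb n))
  obtain ⟨c, _, hc2⟩ := hc.ultrafilter_le_nhds _ hle
  exact ⟨c, hc2⟩

lemma kmUlim_tendsto {U : Ultrafilter ℕ} {u : ℕ → ℝ} {M : ℝ} (hb : ∀ n, |u n| ≤ M) :
    Filter.Tendsto u (U : Filter ℕ) (nhds (kmUlim U u)) :=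
  kmUlim_spec (km_exists_ulim hb)

variable {H : Type*} [NormedAddCommGroup H] [InnerProductSpace ℝ H]

lemma km_norm_combo_sq (a b : H) (t : ℝ) :
    ‖(1 - t) • a + t • b‖ ^ 2
      = (1 - t) * ‖a‖ ^ 2 + t * ‖b‖ ^ 2 - t * (1 - t) * ‖a - b‖ ^ 2 := by
  rw [← real_inner_self_eq_norm_sq, ← real_inner_self_eq_norm_sq,
    ← real_inner_self_eq_norm_sq, ← real_inner_self_eq_norm_sq]
  simp only [inner_add_left, inner_add_right, inner_sub_left, inner_sub_right,
    inner_smul_left, inner_smul_right, RCLike.conj_to_real]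
  have : (inner ℝ a b : ℝ) = inner ℝ b a := real_inner_comm b a
  rw [this]; ring

end KMaux

section KMkey

variable {H : Type*} [NormedAddCommGroup H] [InnerProductSpace ℝ H] [CompleteSpace H]

/-- key lemma: weak limit along an ultrafilter extending atTop is a fixed point. -/
lemma km_key (D : Set H) (hne : D.Nonempty) (hclosed : IsClosed D) (hconv : Convex ℝ D)
    (T : H → H)
    (hnonexp : ∀ x ∈ D, ∀ y ∈ D, ‖T x - T y‖ ≤ ‖x - y‖)
    (f : ℕ → H) (hmem : ∀ n, f n ∈ D)
    (M : ℝ) (hM : ∀ n, ‖f n‖ ≤ M)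
    (hg : Filter.Tendsto (fun n => ‖T (f n) - f n‖) Filter.atTop (nhds 0))
    (U : Ultrafilter ℕ) (hU : (U : Filter ℕ) ≤ Filter.atTop) :
    ∃ p ∈ D, T p = p ∧
      ∀ y : H, Filter.Tendsto (fun n => (inner ℝ (f n) y : ℝ)) (U : Filter ℕ)
        (nhds (inner ℝ p y : ℝ)) := by
  have hM0 : 0 ≤ M := le_trans (norm_nonneg _) (hM 0)
  -- boundedness of inner ℝ products
  have hbdd : ∀ y : H, ∀ n, |(inner ℝ (f n) y : ℝ)| ≤ M * ‖y‖ := fun y n =>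
    le_trans (abs_real_inner_le_norm _ _) (by
      have := hM n; nlinarith [norm_nonneg y, norm_nonneg (f n)])
  -- the limit functional
  set ell : H → ℝ := fun y => kmUlim U (fun n => (inner ℝ (f n) y : ℝ)) with hell
  have hellt : ∀ y : H, Filter.Tendsto (fun n => (inner ℝ (f n) y : ℝ)) (U : Filter ℕ)
      (nhds (ell y)) := fun y => kmUlim_tendsto (hbdd y)
  have hadd : ∀ y z : H, ell (y + z) = ell y + ell z := by
    intro y z
    refine tendsto_nhds_unique (hellt (y + z)) ?_
    have := (hellt y).add (hellt z)
    simpa [inner_add_right] using this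
  have hsmul : ∀ (c : ℝ) (y : H), ell (c • y) = c * ell y := by
    intro c y
    refine tendsto_nhds_unique (hellt (c • y)) ?_
    have := (hellt y).const_mul c
    simpa [inner_smul_right] using this
  have hbnd : ∀ y : H, ‖ell y‖ ≤ M * ‖y‖ := by
    intro y
    rw [Real.norm_eq_abs]
    exact le_of_tendsto (hellt y).abs (Filter.Eventually.of_forall (hbdd y))
  let L : H →L[ℝ] ℝ := LinearMap.mkContinuous
    { toFun := ell, map_add' := hadd, map_smul' := hsmul } M hbnd
  set p : H := (InnerProductSpace.toDual ℝ H).symm L with hp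
  have hpy : ∀ y : H, (inner ℝ p y : ℝ) = ell y := by
    intro y
    have : InnerProductSpace.toDual ℝ H p = L := by
      rw [hp]; exact (InnerProductSpace.toDual ℝ H).apply_symm_apply L
    have h2 := congrArg (fun φ => φ y) this
    simpa [InnerProductSpace.toDual_apply_apply, L] using h2
  have hPy : ∀ y : H, Filter.Tendsto (fun n => (inner ℝ (f n) y : ℝ)) (U : Filter ℕ)
      (nhds (inner ℝ p y : ℝ)) := fun y => by rw [hpy]; exact hellt y
  -- p ∈ D
  have hpD : p ∈ D := by
    obtain ⟨v, hvD, hvinf⟩ := exists_norm_eq_iInf_of_complete_convex hne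
      (hclosed.isComplete) hconv p
    have hchar := (norm_eq_iInf_iff_real_inner_le_zero hconv hvD).mp hvinf
    have hle0 : ∀ n, (inner ℝ (f n) (p - v) : ℝ) - (inner ℝ v (p - v) : ℝ) ≤ 0 := by
      intro n
      have := hchar (f n) (hmem n)
      have h2 : (inner ℝ (p - v) (f n - v) : ℝ)
          = (inner ℝ (f n) (p - v) : ℝ) - (inner ℝ v (p - v) : ℝ) := by
        rw [real_inner_comm]; simp [inner_sub_left]
      linarith [this, h2.symm.le, h2.le]
    have htends : Filter.Tendsto
        (fun n => (inner ℝ (f n) (p - v) : ℝ) - (inner ℝ v (p - v) : ℝ)) (U : Filter ℕ)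
        (nhds ((inner ℝ p (p - v) : ℝ) - (inner ℝ v (p - v) : ℝ))) :=
      (hPy (p - v)).sub tendsto_const_nhds
    have hlim : (inner ℝ p (p - v) : ℝ) - (inner ℝ v (p - v) : ℝ) ≤ 0 :=
      le_of_tendsto htends (Filter.Eventually.of_forall hle0)
    have : (inner ℝ (p - v) (p - v) : ℝ) ≤ 0 := by
      rwa [inner_sub_left]
    have hnz : ‖p - v‖ ^ 2 ≤ 0 := by rwa [real_inner_self_eq_norm_sq] at this
    have : p - v = 0 := by
      have := norm_nonneg (p - v)
      have h0 : ‖p - v‖ = 0 := by nlinarith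
      exact norm_eq_zero.mp h0
    have : p = v := by rwa [sub_eq_zero] at this
    rwa [this]
  -- T p = p
  have hgU : Filter.Tendsto (fun n => ‖T (f n) - f n‖) (U : Filter ℕ) (nhds 0) :=
    hg.mono_left hU
  -- limit of ‖f n‖^2 along U
  obtain ⟨s, hs⟩ := km_exists_ulim (U := U) (u := fun n => ‖f n‖ ^ 2) (M := M ^ 2)
    (fun n => by
      show |‖f n‖ ^ 2| ≤ M ^ 2
      rw [abs_of_nonneg (by positivity)]
      nlinarith [hM n, norm_nonneg (f n)])
  have hnormsq : ∀ x : H, Filter.Tendsto (fun n => ‖f n - x‖ ^ 2) (U : Filter ℕ)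
      (nhds (s - 2 * (inner ℝ p x : ℝ) + ‖x‖ ^ 2)) := by
    intro x
    have h1 : ∀ n, ‖f n - x‖ ^ 2 = ‖f n‖ ^ 2 - 2 * (inner ℝ (f n) x : ℝ) + ‖x‖ ^ 2 :=
      fun n => norm_sub_sq_real _ _
    have := (hs.sub ((hPy x).const_mul 2)).add (tendsto_const_nhds (x := ‖x‖ ^ 2))
    refine this.congr fun n => (h1 n).symm
  set cp : ℝ := s - 2 * (inner ℝ p p : ℝ) + ‖p‖ ^ 2 with hcp
  set ct : ℝ := s - 2 * (inner ℝ p (T p) : ℝ) + ‖T p‖ ^ 2 with hct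
  have hfp : Filter.Tendsto (fun n => ‖f n - p‖) (U : Filter ℕ) (nhds (Real.sqrt cp)) := by
    have := (hnormsq p).sqrt
    refine this.congr fun n => ?_
    rw [Real.sqrt_sq (norm_nonneg _)]
  have hub : ∀ n, ‖f n - T p‖ ≤ ‖T (f n) - f n‖ + ‖f n - p‖ := by
    intro n
    have h1 : ‖f n - T p‖ ≤ ‖f n - T (f n)‖ + ‖T (f n) - T p‖ := norm_sub_le_norm_sub_add_norm_sub _ _ _
    have h2 : ‖T (f n) - T p‖ ≤ ‖f n - p‖ := hnonexp _ (hmem n) _ hpD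
    have h3 : ‖f n - T (f n)‖ = ‖T (f n) - f n‖ := norm_sub_rev _ _
    linarith
  have hct_le : ct ≤ cp := by
    have hrhs : Filter.Tendsto (fun n => (‖T (f n) - f n‖ + ‖f n - p‖) ^ 2)
        (U : Filter ℕ) (nhds ((0 + Real.sqrt cp) ^ 2)) := (hgU.add hfp).pow 2
    have hcpnn : 0 ≤ cp :=
      ge_of_tendsto (hnormsq p) (Filter.Eventually.of_forall fun n => by positivity)
    have hsq : (0 + Real.sqrt cp) ^ 2 = cp := by
      rw [zero_add, Real.sq_sqrt hcpnn]
    rw [hsq] at hrhs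
    refine le_of_tendsto_of_tendsto (hnormsq (T p)) hrhs ?_
    refine Filter.Eventually.of_forall fun n => ?_
    have := hub n
    have h1 : ‖f n - T p‖ ^ 2 ≤ (‖T (f n) - f n‖ + ‖f n - p‖) ^ 2 := by
      nlinarith [norm_nonneg (f n - T p), norm_nonneg (T (f n) - f n), norm_nonneg (f n - p)]
    exact h1
  have hdiff : ct = cp + ‖T p - p‖ ^ 2 := by
    rw [hct, hcp, norm_sub_sq_real, real_inner_self_eq_norm_sq, real_inner_comm p (T p)]
    ring
  have hTp : T p = p := by
    have h0 : ‖T p - p‖ ^ 2 ≤ 0 := by linarith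
    have : T p - p = 0 := by
      have := norm_nonneg (T p - p)
      have h1 : ‖T p - p‖ = 0 := by nlinarith
      exact norm_eq_zero.mp h1
    rwa [sub_eq_zero] at this
  exact ⟨p, hpD, hTp, hPy⟩

end KMkey

/-- **Krasnoselskii–Mann algorithm (Theorem 2, Appendix A).**
Let `D` be a nonempty closed convex subset of a real Hilbert space `H`, and let
`T : D → D` be non-expansive with `Fix T ≠ ∅`.  If `λ_k ∈ [0,1]` with
`∑ λ_k (1-λ_k) = ∞` and `f₀ ∈ D`, then the sequence
`f_{k+1} = f_k + λ_k (T f_k - f_k)` converges weakly to a fixed point of `T`. -/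
theorem krasnoselskii_mann_weak_convergence
    {H : Type*} [NormedAddCommGroup H] [InnerProductSpace ℝ H] [CompleteSpace H]
    (D : Set H) (hne : D.Nonempty) (hclosed : IsClosed D) (hconv : Convex ℝ D)
    (T : H → H) (hmaps : Set.MapsTo T D D)
    (hnonexp : ∀ x ∈ D, ∀ y ∈ D, ‖T x - T y‖ ≤ ‖x - y‖)
    (hfix : ∃ x ∈ D, T x = x)
    (lam : ℕ → ℝ) (hlam : ∀ k, 0 ≤ lam k ∧ lam k ≤ 1)
    (hdiv : ¬ Summable (fun k => lam k * (1 - lam k)))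
    (f : ℕ → H) (hf0 : f 0 ∈ D)
    (hrec : ∀ k, f (k + 1) = f k + lam k • (T (f k) - f k)) :
    ∃ p ∈ D, T p = p ∧
      ∀ y : H, Filter.Tendsto (fun k => (inner ℝ (f k) y : ℝ)) Filter.atTop
        (nhds (inner ℝ p y : ℝ)) := by
  obtain ⟨xs, hxsD, hxsfix⟩ := hfix
  -- membership
  have hmem : ∀ k, f k ∈ D := by
    intro k
    induction k with
    | zero => exact hf0
    | succ k ih =>
      have hT := hmaps ih
      have e : f (k + 1) = (1 - lam k) • f k + lam k • T (f k) := by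
        rw [hrec k]; module
      rw [e]
      exact hconv ih hT (by linarith [(hlam k).2]) (hlam k).1 (by ring)
  -- Fejér inequality
  have hkey : ∀ p, p ∈ D → T p = p → ∀ k,
      ‖f (k + 1) - p‖ ^ 2 ≤ ‖f k - p‖ ^ 2 - lam k * (1 - lam k) * ‖T (f k) - f k‖ ^ 2 := by
    intro p hpD hTp k
    have e : f (k + 1) - p = (1 - lam k) • (f k - p) + lam k • (T (f k) - p) := by
      rw [hrec k]; module
    rw [e, km_norm_combo_sq]
    have h1 : ‖T (f k) - p‖ ≤ ‖f k - p‖ := by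
      have := hnonexp (f k) (hmem k) p hpD
      rwa [hTp] at this
    have h2 : (f k - p) - (T (f k) - p) = f k - T (f k) := by abel
    rw [h2, norm_sub_rev (f k) (T (f k))]
    have hl := hlam k
    have hBA : ‖T (f k) - p‖ ^ 2 ≤ ‖f k - p‖ ^ 2 := by
      nlinarith [norm_nonneg (f k - p), norm_nonneg (T (f k) - p)]
    have hA := mul_le_mul_of_nonneg_left hBA hl.1
    linarith
  have hanti : ∀ p, p ∈ D → T p = p → Antitone (fun k => ‖f k - p‖ ^ 2) := by
    intro p hpD hTp
    apply antitone_nat_of_succ_le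
    intro k
    have h1 := hkey p hpD hTp k
    have hl := hlam k
    have h3 : 0 ≤ lam k * (1 - lam k) * ‖T (f k) - f k‖ ^ 2 :=
      mul_nonneg (mul_nonneg hl.1 (by linarith [hl.2])) (sq_nonneg _)
    linarith
  -- boundedness
  have hb : ∀ n, ‖f n - xs‖ ≤ ‖f 0 - xs‖ := by
    intro n
    have h2 := hanti xs hxsD hxsfix (Nat.zero_le n)
    simp only at h2
    nlinarith [norm_nonneg (f n - xs), norm_nonneg (f 0 - xs)]
  have hM : ∀ n, ‖f n‖ ≤ ‖f 0 - xs‖ + ‖xs‖ := by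
    intro n
    have e : f n = (f n - xs) + xs := by abel
    calc ‖f n‖ = ‖(f n - xs) + xs‖ := by rw [← e]
      _ ≤ ‖f n - xs‖ + ‖xs‖ := norm_add_le _ _
      _ ≤ ‖f 0 - xs‖ + ‖xs‖ := by linarith [hb n]
  -- residuals antitone
  have ganti : Antitone (fun k => ‖T (f k) - f k‖) := by
    apply antitone_nat_of_succ_le
    intro k
    have e1 : f (k + 1) - f k = lam k • (T (f k) - f k) := by rw [hrec k]; module
    have e2 : T (f k) - f (k + 1) = (1 - lam k) • (T (f k) - f k) := by rw [hrec k]; module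
    have h1 : T (f (k + 1)) - f (k + 1)
        = (T (f (k + 1)) - T (f k)) + (T (f k) - f (k + 1)) := by abel
    calc ‖T (f (k + 1)) - f (k + 1)‖
        ≤ ‖T (f (k + 1)) - T (f k)‖ + ‖T (f k) - f (k + 1)‖ := by
          rw [h1]; exact norm_add_le _ _
      _ ≤ ‖f (k + 1) - f k‖ + ‖T (f k) - f (k + 1)‖ := by
          have := hnonexp _ (hmem (k + 1)) _ (hmem k); linarith
      _ = lam k * ‖T (f k) - f k‖ + (1 - lam k) * ‖T (f k) - f k‖ := by
          rw [e1, e2, norm_smul, norm_smul, Real.norm_eq_abs, Real.norm_eq_abs,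
            abs_of_nonneg (hlam k).1, abs_of_nonneg (by linarith [(hlam k).2])]
      _ = ‖T (f k) - f k‖ := by ring
  -- summability
  have htel : ∀ n, ∑ k ∈ Finset.range n, lam k * (1 - lam k) * ‖T (f k) - f k‖ ^ 2
      ≤ ‖f 0 - xs‖ ^ 2 - ‖f n - xs‖ ^ 2 := by
    intro n
    induction n with
    | zero => simp
    | succ n ih =>
      rw [Finset.sum_range_succ]
      have := hkey xs hxsD hxsfix n
      linarith
  have hsummable : Summable (fun k => lam k * (1 - lam k) * ‖T (f k) - f k‖ ^ 2) := by
    refine summable_of_sum_range_le (c := ‖f 0 - xs‖ ^ 2) (fun k => ?_) (fun n => ?_)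
    · exact mul_nonneg (mul_nonneg (hlam k).1 (by linarith [(hlam k).2])) (sq_nonneg _)
    · have := htel n
      nlinarith [sq_nonneg ‖f n - xs‖]
  -- residual tends to 0
  have gbdd : BddBelow (Set.range fun k => ‖T (f k) - f k‖) := by
    refine ⟨0, ?_⟩
    rintro x ⟨k, rfl⟩
    exact norm_nonneg _
  have gtend : Filter.Tendsto (fun k => ‖T (f k) - f k‖) Filter.atTop
      (nhds (⨅ k, ‖T (f k) - f k‖)) := tendsto_atTop_ciInf ganti gbdd
  have hL0 : 0 ≤ ⨅ k, ‖T (f k) - f k‖ := le_ciInf fun k => norm_nonneg _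
  have hLzero : (⨅ k, ‖T (f k) - f k‖) = 0 := by
    by_contra hne0
    have hLpos : 0 < ⨅ k, ‖T (f k) - f k‖ := lt_of_le_of_ne hL0 (Ne.symm hne0)
    have hs1 : Summable (fun k => lam k * (1 - lam k) * (⨅ k, ‖T (f k) - f k‖) ^ 2) := by
      refine Summable.of_nonneg_of_le (fun k => ?_) (fun k => ?_) hsummable
      · exact mul_nonneg (mul_nonneg (hlam k).1 (by linarith [(hlam k).2]))
          (sq_nonneg _)
      · have hLe : (⨅ k, ‖T (f k) - f k‖) ≤ ‖T (f k) - f k‖ := ciInf_le gbdd k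
        have hl := hlam k
        have hL2 : (⨅ k, ‖T (f k) - f k‖) ^ 2 ≤ ‖T (f k) - f k‖ ^ 2 := by
          nlinarith [hLe, hL0]
        exact mul_le_mul_of_nonneg_left hL2
          (mul_nonneg hl.1 (by linarith [hl.2]))
    have hs2 : Summable (fun k => lam k * (1 - lam k)) := by
      have h2 := hs1.mul_right ((⨅ k, ‖T (f k) - f k‖) ^ 2)⁻¹
      refine h2.congr fun k => ?_
      field_simp
    exact hdiv hs2
  have gtend0 : Filter.Tendsto (fun k => ‖T (f k) - f k‖) Filter.atTop (nhds 0) := by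
    rwa [hLzero] at gtend
  -- ultrafilter construction
  have hUle : ((Ultrafilter.of (Filter.atTop : Filter ℕ)) : Filter ℕ) ≤ Filter.atTop :=
    Ultrafilter.of_le _
  obtain ⟨p, hpD, hTp, hPy⟩ := km_key D hne hclosed hconv T hnonexp f hmem
    (‖f 0 - xs‖ + ‖xs‖) hM gtend0 (Ultrafilter.of Filter.atTop) hUle
  refine ⟨p, hpD, hTp, ?_⟩
  intro y
  rw [tendsto_iff_ultrafilter]
  intro V hV
  obtain ⟨q, hqD, hTq, hQy⟩ := km_key D hne hclosed hconv T hnonexp f hmem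
    (‖f 0 - xs‖ + ‖xs‖) hM gtend0 V hV
  -- uniqueness of weak cluster point
  have cvp : Filter.Tendsto (fun n => ‖f n - p‖ ^ 2) Filter.atTop
      (nhds (⨅ n, ‖f n - p‖ ^ 2)) :=
    tendsto_atTop_ciInf (hanti p hpD hTp) ⟨0, by rintro x ⟨k, rfl⟩; exact sq_nonneg _⟩
  have cvq : Filter.Tendsto (fun n => ‖f n - q‖ ^ 2) Filter.atTop
      (nhds (⨅ n, ‖f n - q‖ ^ 2)) :=
    tendsto_atTop_ciInf (hanti q hqD hTq) ⟨0, by rintro x ⟨k, rfl⟩; exact sq_nonneg _⟩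
  have hinner : Filter.Tendsto (fun n => (inner ℝ (f n) (p - q) : ℝ)) Filter.atTop
      (nhds ((‖p‖ ^ 2 - ‖q‖ ^ 2 - ((⨅ n, ‖f n - p‖ ^ 2) - ⨅ n, ‖f n - q‖ ^ 2)) / 2)) := by
    have h1 : Filter.Tendsto
        (fun n => (‖p‖ ^ 2 - ‖q‖ ^ 2 - (‖f n - p‖ ^ 2 - ‖f n - q‖ ^ 2)) / 2) Filter.atTop
        (nhds ((‖p‖ ^ 2 - ‖q‖ ^ 2 - ((⨅ n, ‖f n - p‖ ^ 2) - ⨅ n, ‖f n - q‖ ^ 2)) / 2)) :=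
      (tendsto_const_nhds.sub (cvp.sub cvq)).div_const 2
    refine h1.congr fun n => ?_
    have e1 := norm_sub_sq_real (f n) p
    have e2 := norm_sub_sq_real (f n) q
    rw [inner_sub_right]
    linarith
  have hpq : p = q := by
    have ha := tendsto_nhds_unique (hPy (p - q)) (hinner.mono_left hUle)
    have hb2 := tendsto_nhds_unique (hQy (p - q)) (hinner.mono_left hV)
    have hz : (inner ℝ (p - q) (p - q) : ℝ) = 0 := by
      rw [inner_sub_left]; linarith
    have hn : ‖p - q‖ ^ 2 = 0 := by
      rwa [real_inner_self_eq_norm_sq] at hz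
    have : p - q = 0 := by
      have := norm_nonneg (p - q)
      have h0 : ‖p - q‖ = 0 := by nlinarith
      exact norm_eq_zero.mp h0
    rwa [sub_eq_zero] at this
  rw [hpq]
  exact hQy y
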